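/- arXiv:1702.00374 — 2 statements merged into one kernel-verified Lean document; each statement's English description precedes it below -/
import Mathlib

section
/- There exist a CPO X with a metric d : X × X → ℝ≥0∞ and an ω-chain of continuous, non-expansive functions (fₙ : X → X) whose least upper bound is not non-expansive. Concretely, take X = ℕ∞ + ℕ∞ (two copies of the naturals extended with a top element, with the linear order), with d(inl n, inr n) = 1 if n = ∞ and 0 otherwise, and all other distinct pairs at distance ∞; the constant-in-value functions fₙ(ι_k m) = ι_k n form a chain whose supremum f satisfies d(f(ι₁ 0), f(ι₂ 0)) = 1 > 0 = d(ι₁ 0, ι₂ 0). -/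
open ENNReal OmegaCompletePartialOrder

/-- `d` is an extended pseudo-metric on `X`. -/
def IsEPMetric {X : Type*} (d : X → X → ℝ≥0∞) : Prop :=
  (∀ x, d x x = 0) ∧ (∀ x y, d x y = d y x) ∧ (∀ x y z, d x z ≤ d x y + d y z)

/-- Non-expansiveness of `f` with respect to metrics `dX`, `dY`. -/
def NonExpansive {X Y : Type*} (dX : X → X → ℝ≥0∞) (dY : Y → Y → ℝ≥0∞)
    (f : X → Y) : Prop :=
  ∀ x y, dY (f x) (f y) ≤ dX x y

abbrev XX : Type := Bool × ℕ∞

noncomputable def dd : XX → XX → ℝ≥0∞ := fun x y =>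
  if x.2 = y.2 then (if x.1 = y.1 then 0 else if x.2 = ⊤ then 1 else 0) else ⊤

def ffo (c : ℕ∞) : XX →o XX := ⟨fun p => (p.1, c), fun _ _ h => ⟨h.1, le_rfl⟩⟩

lemma ffo_cont (c : ℕ∞) (ch : Chain XX) : ffo c (ωSup ch) = ωSup (ch.map (ffo c)) := by
  apply le_antisymm
  · constructor
    · show ωSup (ch.map OrderHom.fst) ≤ ωSup ((ch.map (ffo c)).map OrderHom.fst)
      rw [Chain.map_comp]
      exact le_of_eq (congrArg ωSup (by rfl))
    · show c ≤ ωSup ((ch.map (ffo c)).map OrderHom.snd)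
      exact le_ωSup_of_le 0 le_rfl
  · apply ωSup_le
    intro i
    exact ⟨(le_ωSup ch i).1, le_rfl⟩

def ff (c : ℕ∞) : XX →𝒄 XX := ⟨ffo c, ffo_cont c⟩

lemma enat_top_of_forall (a : ℕ∞) (h : ∀ n : ℕ, (n : ℕ∞) ≤ a) : a = ⊤ := by
  cases a with
  | top => rfl
  | coe k => exact absurd (h (k + 1)) (by exact_mod_cast by omega)

lemma dd_metric : IsEPMetric dd := by
  refine ⟨fun x => by simp [dd], fun x y => ?_, fun x y z => ?_⟩
  · unfold dd
    rcases eq_or_ne x.2 y.2 with h | h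
    · rw [if_pos h, if_pos h.symm, h]
      rcases eq_or_ne x.1 y.1 with h2 | h2
      · simp [h2]
      · simp [h2, h2.symm]
    · rw [if_neg h, if_neg (Ne.symm h)]
  · unfold dd
    rcases eq_or_ne x.2 y.2 with h1 | h1 <;> rcases eq_or_ne y.2 z.2 with h2 | h2
    · have h3 : x.2 = z.2 := h1.trans h2
      simp only [h1, h2, h3, if_pos rfl]
      rcases eq_or_ne x.1 z.1 with h4 | h4
      · simp [h4]
      · have h5 : x.1 ≠ y.1 ∨ y.1 ≠ z.1 := by
          by_contra hc
          push_neg at hc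
          exact h4 (hc.1.trans hc.2)
        simp only [if_neg h4]
        rcases h5 with h5 | h5
        · refine le_trans ?_ le_self_add
          simp [h5, ← h2]
        · refine le_trans ?_ le_add_self
          simp [h5]
    · simp [h2]
    · simp [h1]
    · simp [h1]

/-- There is a CPO with an extended pseudo-metric and an ω-chain of continuous
non-expansive endofunctions whose least upper bound fails to be non-expansive. -/
theorem exists_chain_of_nonexpansive_with_nonexpansive_failing_lub :
    ∃ (X : Type) (_ : OmegaCompletePartialOrder X) (d : X → X → ℝ≥0∞)
      (f : ℕ → X →𝒄 X) (F : X →𝒄 X),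
      IsEPMetric d ∧
      Monotone f ∧
      (∀ n, NonExpansive d d (f n)) ∧
      IsLUB (Set.range f) F ∧
      ¬ NonExpansive d d F := by
  refine ⟨XX, inferInstance, dd, fun n => ff n, ff ⊤, dd_metric, ?_, ?_, ⟨?_, ?_⟩, ?_⟩
  · intro m n h p
    refine ⟨le_rfl, ?_⟩
    show (m : ℕ∞) ≤ (n : ℕ∞)
    exact_mod_cast h
  · intro n x y
    show dd (x.1, (n : ℕ∞)) (y.1, (n : ℕ∞)) ≤ dd x y
    unfold dd
    rcases eq_or_ne x.1 y.1 with h | h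
    · simp [h]
    · have hn : ((n : ℕ∞)) ≠ ⊤ := by simp
      simp [h, hn]
  · rintro g ⟨n, rfl⟩ p
    exact ⟨le_rfl, le_top⟩
  · intro g hg p
    refine ⟨(hg ⟨0, rfl⟩ p).1, ?_⟩
    have : ∀ n : ℕ, (n : ℕ∞) ≤ (g p).2 := fun n => (hg ⟨n, rfl⟩ p).2
    exact (enat_top_of_forall _ this).ge
  · intro h
    have : dd (true, ⊤) (false, ⊤) ≤ dd (true, 0) (false, 0) := h (true, 0) (false, 0)
    simp [ff, ffo, dd] at this
end

section
/- Let X be a pointed metric CPO and r ∈ ℝ≥0∞. For continuous functions f, g : X → X that are r-sensitive (d(f x, f y) ≤ r·d(x, y)), the iterates satisfy d(fⁱ(⊥), gⁱ(⊥)) ≤ (Σ_{j<i} rʲ)·d(f, g) for all i, where d(f,g) = sup_x d(f x, g x). Consequently, if r < 1 then the least fixed points satisfy d(fix f, fix g) ≤ (1/(1−r))·d(f, g). -/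
open ENNReal OmegaCompletePartialOrder

/-- Fuzz multiplication on ℝ≥0∞: usual multiplication except `0 * ∞ = ∞`. -/
noncomputable def fuzzMul (r s : ℝ≥0∞) : ℝ≥0∞ :=
  if r = 0 ∧ s = ∞ then ∞ else r * s

/-- The metric-CPO compatibility condition. -/
def IsMetricCPO {X : Type*} [OmegaCompletePartialOrder X]
    (d : X → X → ℝ≥0∞) : Prop :=
  ∀ (r : ℝ≥0∞) (c c' : Chain X),
    (∀ i, d (c i) (c' i) ≤ r) → d (ωSup c) (ωSup c') ≤ r

lemma fuzzMul_of_ne_zero {r s : ℝ≥0∞} (h : r ≠ 0) : fuzzMul r s = r * s := by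
  simp [fuzzMul, h]

lemma fuzzMul_of_ne_top {r s : ℝ≥0∞} (h : s ≠ ∞) : fuzzMul r s = r * s := by
  simp [fuzzMul, h]

lemma iterate_mono {X : Type*} [OmegaCompletePartialOrder X] [OrderBot X]
    (f : X →𝒄 X) : Monotone fun i : ℕ => (⇑f)^[i] ⊥ := by
  apply monotone_nat_of_le_succ
  intro i
  induction i with
  | zero => exact bot_le
  | succ n ih =>
    rw [Function.iterate_succ_apply', Function.iterate_succ_apply']
    exact f.monotone' ih

theorem fixpoint_sensitivity {X : Type*}
    [OmegaCompletePartialOrder X] [OrderBot X]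
    (d : X → X → ℝ≥0∞) (hdm : IsEPMetric d) (hd : IsMetricCPO d)
    (r : ℝ≥0∞) (f g : X →𝒄 X)
    (hf : ∀ x y, d (f x) (f y) ≤ fuzzMul r (d x y))
    (hg : ∀ x y, d (g x) (g y) ≤ fuzzMul r (d x y)) :
    -- the iterates satisfy d(fⁱ ⊥, gⁱ ⊥) ≤ (Σ_{j<i} rʲ) · d(f, g)
    (∀ i : ℕ,
      d ((⇑f)^[i] ⊥) ((⇑g)^[i] ⊥) ≤
        fuzzMul (∑ j ∈ Finset.range i, r ^ j) (⨆ x : X, d (f x) (g x))) ∧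
    -- consequently, if r < 1, the least fixed points (Kleene lubs of the
    -- iterates) satisfy d(fix f, fix g) ≤ (1/(1−r)) · d(f, g)
    (r < 1 →
      ∀ lf lg : X,
        IsLUB (Set.range fun i : ℕ => (⇑f)^[i] ⊥) lf →
        IsLUB (Set.range fun i : ℕ => (⇑g)^[i] ⊥) lg →
        d lf lg ≤ fuzzMul (1 - r)⁻¹ (⨆ x : X, d (f x) (g x))) := by
  obtain ⟨hrefl, hsymm, htri⟩ := hdm
  set D : ℝ≥0∞ := ⨆ x : X, d (f x) (g x) with hD
  have key : ∀ i : ℕ,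
      d ((⇑f)^[i] ⊥) ((⇑g)^[i] ⊥) ≤ fuzzMul (∑ j ∈ Finset.range i, r ^ j) D := by
    intro i
    induction i with
    | zero => simp [hrefl]
    | succ n ih =>
      by_cases hDtop : D = ∞
      · have h1 : (∑ j ∈ Finset.range (n + 1), r ^ j) ≠ 0 := by
          have hone : (1:ℝ≥0∞) ≤ ∑ j ∈ Finset.range (n + 1), r ^ j := by
            simpa using Finset.single_le_sum (f := fun j => r ^ j)
              (fun _ _ => zero_le) (Finset.mem_range.mpr (Nat.succ_pos n))
          exact ne_of_gt (lt_of_lt_of_le zero_lt_one hone)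
        rw [fuzzMul_of_ne_zero h1, hDtop, ENNReal.mul_top h1]
        exact le_top
      · -- D finite
        have hfz : ∀ s : ℝ≥0∞, fuzzMul s D = s * D := fun s => fuzzMul_of_ne_top hDtop
        rw [hfz]
        have step : d ((⇑f)^[n+1] ⊥) ((⇑g)^[n+1] ⊥) ≤
            fuzzMul r (d ((⇑f)^[n] ⊥) ((⇑g)^[n] ⊥)) + D := by
          rw [Function.iterate_succ_apply', Function.iterate_succ_apply']
          calc d (f ((⇑f)^[n] ⊥)) (g ((⇑g)^[n] ⊥))
              ≤ d (f ((⇑f)^[n] ⊥)) (f ((⇑g)^[n] ⊥)) + d (f ((⇑g)^[n] ⊥)) (g ((⇑g)^[n] ⊥)) :=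
                htri _ _ _
            _ ≤ fuzzMul r (d ((⇑f)^[n] ⊥) ((⇑g)^[n] ⊥)) + D :=
                add_le_add (hf _ _) (le_iSup (fun x => d (f x) (g x)) _)
        refine step.trans ?_
        have ih' : d ((⇑f)^[n] ⊥) ((⇑g)^[n] ⊥) ≤ (∑ j ∈ Finset.range n, r ^ j) * D := by
          rw [← hfz]; exact ih
        have hmul : fuzzMul r (d ((⇑f)^[n] ⊥) ((⇑g)^[n] ⊥)) ≤
            r * ((∑ j ∈ Finset.range n, r ^ j) * D) := by
          by_cases hr : r = 0
          · subst hr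
            have hsum : (∑ j ∈ Finset.range n, (0:ℝ≥0∞) ^ j) ≤ 1 := by
              cases n with
              | zero => simp
              | succ m =>
                rw [Finset.sum_eq_single 0]
                · simp
                · intro b _ hb; exact zero_pow hb
                · simp
            have hfin : (∑ j ∈ Finset.range n, (0:ℝ≥0∞) ^ j) * D ≠ ∞ :=
              ENNReal.mul_ne_top (ne_top_of_le_ne_top one_ne_top hsum) hDtop
            have hdfin : d ((⇑f)^[n] ⊥) ((⇑g)^[n] ⊥) ≠ ∞ :=
              ne_top_of_le_ne_top hfin ih'
            rw [fuzzMul_of_ne_top hdfin]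
            exact mul_le_mul_right ih' 0
          · rw [fuzzMul_of_ne_zero hr]
            exact mul_le_mul_right ih' r
        refine (add_le_add_left hmul D).trans ?_
        have hgs : (∑ j ∈ Finset.range (n + 1), r ^ j)
            = 1 + r * ∑ j ∈ Finset.range n, r ^ j := by
          rw [geom_sum_succ, add_comm]
        rw [hgs, add_mul, one_mul, mul_assoc, add_comm]
  refine ⟨key, ?_⟩
  intro hr1 lf lg hlf hlg
  -- chains
  let cf : Chain X := ⟨fun i => (⇑f)^[i] ⊥, iterate_mono f⟩
  let cg : Chain X := ⟨fun i => (⇑g)^[i] ⊥, iterate_mono g⟩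
  have hlub : ∀ (c : Chain X), IsLUB (Set.range fun i : ℕ => c i) (ωSup c) := by
    intro c
    constructor
    · rintro x ⟨i, rfl⟩; exact le_ωSup c i
    · intro ub hub; exact ωSup_le c ub fun i => hub ⟨i, rfl⟩
  have hef : lf = ωSup cf := hlf.unique (hlub cf)
  have heg : lg = ωSup cg := hlg.unique (hlub cg)
  rw [hef, heg]
  have hinv : (1 - r)⁻¹ ≠ 0 := by
    simp [ENNReal.inv_ne_zero, ENNReal.sub_ne_top]
  rw [fuzzMul_of_ne_zero hinv]
  apply hd
  intro i
  refine (key i).trans ?_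
  by_cases hDtop : D = ∞
  · rw [hDtop, ENNReal.mul_top hinv]; exact le_top
  · rw [fuzzMul_of_ne_top hDtop]
    refine mul_le_mul_left ?_ D
    calc (∑ j ∈ Finset.range i, r ^ j) ≤ ∑' j : ℕ, r ^ j := ENNReal.sum_le_tsum _
      _ = (1 - r)⁻¹ := ENNReal.tsum_geometric r
end
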